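/- Let x, y ∈ X be distinct, let Π_{x,y} be the set of permutations of X fixing x and y (so |Π_{x,y}| = (n−2)!), let c be a tournament on X and ℓ ∈ {0,1} with (c x y if and only if ℓ = 1). Put s0 = |{z ∈ X ∖ {x,y} : c x z}|/(n−2) and s1 = |{z ∈ X ∖ {x,y} : c y z}|/(n−2). Then t⟨x,y,ℓ,s0,s1⟩ = (1/(n−2)!) · Σ_{π ∈ Π_{x,y}} t[π·c]. -/

import Mathlib

open scoped BigOperators

variable {X : Type*}

/-- A tournament on `X`: irreflexive and, on distinct points, exactly one direction holds. -/
def IsTournament (R : X → X → Prop) : Prop :=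
  (∀ x, ¬ R x x) ∧ ∀ x y : X, x ≠ y → (R x y ↔ ¬ R y x)

/-- Out-degree of `x` in the relation `R`. -/
noncomputable def valT (R : X → X → Prop) (x : X) : ℕ :=
  Set.ncard {y | R x y}

/-- A tournament is balanced if every out-degree equals `(n-1)/2`. -/
def IsBalanced [Fintype X] (R : X → X → Prop) : Prop :=
  ∀ x : X, (valT R x : ℝ) = ((Fintype.card X : ℝ) - 1) / 2

/-- Action of a permutation on a relation. -/
def permAct (π : Equiv.Perm X) (R : X → X → Prop) : X → X → Prop :=
  fun x y => R (π.symm x) (π.symm y)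

/-- A set of relations closed under the permutation action. -/
def SymmetricSet (D : Set (X → X → Prop)) : Prop :=
  ∀ (π : Equiv.Perm X), ∀ R ∈ D, permAct π R ∈ D

/-- The majority closure of a set of tournaments. -/
def majCl [Fintype X] (D : Set (X → X → Prop)) : Set (X → X → Prop) :=
  {d | IsTournament d ∧ ∃ w : (X → X → Prop) → ℝ,
    (∀ c, 0 ≤ w c ∧ w c ≤ 1) ∧
    (∀ c, w c ≠ 0 → c ∈ D) ∧
    (Function.support w).Finite ∧
    (∑ᶠ c, w c) = 1 ∧
    ∀ x y : X, x ≠ y →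
      (d x y ↔ 1 / 2 < ∑ᶠ c ∈ {c : X → X → Prop | c ∈ D ∧ c x y}, w c)}

open Classical in
noncomputable def tOf (d : X → X → Prop) : X → X → ℝ :=
  fun x y => if d x y then 1 else 0

/-- pr-cl: the convex hull of `{t[d] : d ∈ D}`. -/
noncomputable def prCl (D : Set (X → X → Prop)) : Set (X → X → ℝ) :=
  convexHull ℝ (tOf '' D)

/-- `t` is a weighted tournament. -/
def IsWeighted (t : X → X → ℝ) : Prop :=
  ∀ x y : X, x ≠ y → 0 ≤ t x y ∧ t x y ≤ 1 ∧ t y x = 1 - t x y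

/-- A weighted tournament is balanced if each row sums to `(n-1)/2`. -/
def BalancedW [Fintype X] (t : X → X → ℝ) : Prop :=
  ∀ x : X, (∑ᶠ y ∈ {y : X | y ≠ x}, t x y) = ((Fintype.card X : ℝ) - 1) / 2

/-- A tournament is pseudo-balanced if it is dominated by a balanced weighted tournament. -/
def PseudoBalanced [Fintype X] (c : X → X → Prop) : Prop :=
  ∃ t : X → X → ℝ, IsWeighted t ∧ BalancedW t ∧
    ∀ x y : X, x ≠ y → c x y → 1 / 2 < t x y

open Classical in
noncomputable def tConfig (x y : X) (a s0 s1 : ℝ) : X → X → ℝ :=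
  fun u v =>
    if u = v then 0
    else if u = x ∧ v = y then a
    else if u = y ∧ v = x then 1 - a
    else if u = x then s0
    else if v = x then 1 - s0
    else if u = y then s1
    else if v = y then 1 - s1
    else 1 / 2

/-- `Prd_ℓ(𝒟)`. -/
noncomputable def PrdL [Fintype X] (l : ℕ) (D : Set (X → X → Prop)) : Set (ℝ × ℝ) :=
  {p | ∃ c ∈ D, ∃ x y : X, x ≠ y ∧ (c x y ↔ l = 1) ∧
    p.1 = (Set.ncard {z : X | z ≠ x ∧ z ≠ y ∧ c x z} : ℝ) / ((Fintype.card X : ℝ) - 2) ∧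
    p.2 = (Set.ncard {z : X | z ≠ x ∧ z ≠ y ∧ c y z} : ℝ) / ((Fintype.card X : ℝ) - 2)}

/-- `Pr_A(𝒟)`. -/
noncomputable def PrA [Fintype X] (A : Set ℝ) (D : Set (X → X → Prop)) : Set (ℝ × ℝ) :=
  {p | 0 ≤ p.1 ∧ p.1 ≤ 1 ∧ 0 ≤ p.2 ∧ p.2 ≤ 1 ∧
    ∃ x y : X, x ≠ y ∧ ∃ a ∈ A, tConfig x y a p.1 p.2 ∈ prCl D}

/-- `V_ℓ(d)` as a subset of `ℝ²`. -/
noncomputable def Vset [Fintype X] (l : ℕ) (d : X → X → Prop) : Set (ℝ × ℝ) :=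
  {p | ∃ x y : X, x ≠ y ∧ (if l = 1 then d x y else d y x) ∧
    p = ((valT d x : ℝ), (valT d y : ℝ))}

/-- `V*_ℓ(d)`. -/
noncomputable def VstarSet [Fintype X] (l : ℕ) (d : X → X → Prop) : Set (ℝ × ℝ) :=
  {p | ∃ q ∈ Vset l d, p = (q.1 - (l : ℝ), q.2 - (1 - (l : ℝ)))}

open Classical in
noncomputable def tCycle (k : ℕ) (xs : ℕ → X) (a : ℝ) : X → X → ℝ :=
  fun u v =>
    if u = v then 0
    else if ∃ i < k, u = xs i ∧ v = xs ((i + 1) % k) then a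
    else if ∃ i < k, v = xs i ∧ u = xs ((i + 1) % k) then 1 - a
    else 1 / 2

open Classical in
noncomputable def tTriple (x y z : X) : X → X → ℝ :=
  fun u v =>
    if u = v then 0
    else if (u, v) = (x, y) ∨ (u, v) = (y, z) ∨ (u, v) = (z, x) then 1
    else if (u, v) = (y, x) ∨ (u, v) = (z, y) ∨ (u, v) = (x, z) then 0
    else 1 / 2

/-- The dual (reverse) tournament. -/
def dualT (c : X → X → Prop) : X → X → Prop := fun x y => c y x

/-- The symmetric closure (orbit) of a single tournament. -/
def symCl (c : X → X → Prop) : Set (X → X → Prop) :=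
  {d | ∃ π : Equiv.Perm X, d = permAct π c}

section AuxStmt7
variable {X : Type*} [Fintype X] [DecidableEq X]

lemma card_compl_pair (x y : X) (hxy : x ≠ y) :
    (Finset.univ.filter (fun z : X => z ≠ x ∧ z ≠ y)).card = Fintype.card X - 2 := by
  have : (Finset.univ.filter (fun z : X => z ≠ x ∧ z ≠ y)) = Finset.univ \ {x, y} := by
    ext z; simp [and_comm]
  rw [this, Finset.card_sdiff_of_subset (Finset.subset_univ _), Finset.card_pair hxy, Finset.card_univ]

lemma card_stab (x y : X) (hxy : x ≠ y) :
    (Finset.univ.filter (fun π : Equiv.Perm X => π x = x ∧ π y = y)).card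
      = (Fintype.card X - 2).factorial := by
  have e : {π : Equiv.Perm X // π x = x ∧ π y = y} ≃ Equiv.Perm {z : X // z ≠ x ∧ z ≠ y} :=
    { toFun := fun π => (π : Equiv.Perm X).subtypePerm (by
        intro z
        constructor
        · rintro ⟨h1, h2⟩
          constructor
          · intro h; subst h; exact h1 π.2.1
          · intro h; subst h; exact h2 π.2.2
        · rintro ⟨h1, h2⟩
          constructor
          · intro h; exact h1 (π.1.injective (h.trans π.2.1.symm))
          · intro h; exact h2 (π.1.injective (h.trans π.2.2.symm)))
      invFun := fun σ => ⟨Equiv.Perm.ofSubtype σ, by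
        constructor
        · exact Equiv.Perm.ofSubtype_apply_of_not_mem σ (by simp)
        · exact Equiv.Perm.ofSubtype_apply_of_not_mem σ (by simp)⟩
      left_inv := fun π => by
        ext1
        exact Equiv.Perm.ofSubtype_subtypePerm _ (by
          intro z hz
          constructor
          · intro h; subst h; exact hz (π.2.1)
          · intro h; subst h; exact hz (π.2.2))
      right_inv := fun σ => Equiv.Perm.subtypePerm_ofSubtype σ }
  have h1 : (Finset.univ.filter (fun π : Equiv.Perm X => π x = x ∧ π y = y)).card
      = Fintype.card {π : Equiv.Perm X // π x = x ∧ π y = y} :=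
    (Fintype.card_subtype _).symm
  rw [h1, Fintype.card_congr e, Fintype.card_perm, Fintype.card_subtype, card_compl_pair x y hxy]

lemma key_sum (x y : X) (hxy : x ≠ y) (g : X → ℝ) (v : X) (hvx : v ≠ x) (hvy : v ≠ y) :
    ((Fintype.card X - 2 : ℕ) : ℝ) *
      (∑ π ∈ Finset.univ.filter (fun π : Equiv.Perm X => π x = x ∧ π y = y), g (π.symm v))
    = ((Fintype.card X - 2).factorial : ℝ) *
        ∑ w ∈ Finset.univ.filter (fun w : X => w ≠ x ∧ w ≠ y), g w := by
  set S := Finset.univ.filter (fun π : Equiv.Perm X => π x = x ∧ π y = y) with hS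
  -- fibers of π ↦ π.symm v
  have fib_empty : ∀ w : X, (w = x ∨ w = y) → S.filter (fun π => π.symm v = w) = ∅ := by
    intro w hw
    rw [Finset.filter_eq_empty_iff]
    intro π hπ hpv
    rw [hS, Finset.mem_filter] at hπ
    rcases hw with hw | hw <;> subst hw
    · exact hvx (by rw [← hπ.2.1, ← hpv, Equiv.apply_symm_apply])
    · exact hvy (by rw [← hπ.2.2, ← hpv, Equiv.apply_symm_apply])
  have fib_card : ∀ w : X, w ≠ x → w ≠ y →
      (S.filter (fun π => π.symm v = w)).card = (S.filter (fun π => π.symm v = v)).card := by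
    intro w hwx hwy
    by_cases hwv : w = v
    · subst hwv; rfl
    apply Finset.card_nbij' (fun π => π * Equiv.swap v w) (fun π => π * Equiv.swap v w)
    · intro π hπ
      rw [Finset.mem_coe, Finset.mem_filter] at hπ ⊢
      rw [hS, Finset.mem_filter] at hπ ⊢
      obtain ⟨⟨-, hx1, hy1⟩, hv1⟩ := hπ
      refine ⟨⟨Finset.mem_univ _, ?_, ?_⟩, ?_⟩
      · simp [Equiv.Perm.mul_apply, Equiv.swap_apply_of_ne_of_ne (Ne.symm hvx) (Ne.symm hwx), hx1]
      · simp [Equiv.Perm.mul_apply, Equiv.swap_apply_of_ne_of_ne (Ne.symm hvy) (Ne.symm hwy), hy1]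
      · rw [Equiv.symm_apply_eq, Equiv.Perm.mul_apply, Equiv.swap_apply_left, ← hv1,
          Equiv.apply_symm_apply]
    · intro π hπ
      rw [Finset.mem_coe, Finset.mem_filter] at hπ ⊢
      rw [hS, Finset.mem_filter] at hπ ⊢
      obtain ⟨⟨-, hx1, hy1⟩, hv1⟩ := hπ
      refine ⟨⟨Finset.mem_univ _, ?_, ?_⟩, ?_⟩
      · simp [Equiv.Perm.mul_apply, Equiv.swap_apply_of_ne_of_ne (Ne.symm hvx) (Ne.symm hwx), hx1]
      · simp [Equiv.Perm.mul_apply, Equiv.swap_apply_of_ne_of_ne (Ne.symm hvy) (Ne.symm hwy), hy1]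
      · rw [Equiv.symm_apply_eq, Equiv.Perm.mul_apply, Equiv.swap_apply_right, ← hv1,
          Equiv.apply_symm_apply]
        exact hv1
    · intro π _; simp only [mul_assoc, Equiv.swap_mul_self, mul_one]
    · intro π _; simp only [mul_assoc, Equiv.swap_mul_self, mul_one]
  set f0 := (S.filter (fun π => π.symm v = v)).card with hf0
  have step1 : (∑ π ∈ S, g (π.symm v))
      = ∑ w ∈ Finset.univ.filter (fun w : X => w ≠ x ∧ w ≠ y), (f0 : ℝ) * g w := by
    rw [← Finset.sum_fiberwise_of_maps_to (fun π _ => Finset.mem_univ (Equiv.symm π v))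
      (fun π => g (π.symm v))]
    rw [← Finset.sum_subset (Finset.subset_univ (Finset.univ.filter (fun w : X => w ≠ x ∧ w ≠ y)))]
    · apply Finset.sum_congr rfl
      intro w hw
      rw [Finset.mem_filter] at hw
      have : ∀ π ∈ S.filter (fun π => π.symm v = w), g (π.symm v) = g w := by
        intro π hπ
        rw [Finset.mem_filter] at hπ
        rw [hπ.2]
      rw [Finset.sum_congr rfl this, Finset.sum_const, nsmul_eq_mul, fib_card w hw.2.1 hw.2.2]
    · intro w _ hw
      rw [Finset.mem_filter, not_and] at hw
      have : w = x ∨ w = y := by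
        by_contra h
        push_neg at h
        exact hw (Finset.mem_univ _) ⟨h.1, h.2⟩
      rw [fib_empty w this, Finset.sum_empty]
  have step2 : S.card = (Fintype.card X - 2) * f0 := by
    have h1 : S.card = ∑ w ∈ Finset.univ.filter (fun w : X => w ≠ x ∧ w ≠ y),
        (S.filter (fun π => π.symm v = w)).card := by
      rw [Finset.card_eq_sum_card_fiberwise (fun π (_ : π ∈ S) => Finset.mem_univ (Equiv.symm π v))]
      symm
      apply Finset.sum_subset (Finset.subset_univ _)
      intro w _ hw
      rw [Finset.mem_filter, not_and] at hw
      have : w = x ∨ w = y := by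
        by_contra h
        push_neg at h
        exact hw (Finset.mem_univ _) ⟨h.1, h.2⟩
      rw [fib_empty w this, Finset.card_empty]
    rw [h1, Finset.sum_congr rfl (fun w hw => fib_card w (Finset.mem_filter.mp hw).2.1
      (Finset.mem_filter.mp hw).2.2), Finset.sum_const, card_compl_pair x y hxy, smul_eq_mul]
  have step3 : ((Fintype.card X - 2 : ℕ) : ℝ) * (f0 : ℝ) = ((Fintype.card X - 2).factorial : ℝ) := by
    rw [← Nat.cast_mul, ← step2, card_stab x y hxy]
  rw [step1, Finset.mul_sum, Finset.mul_sum]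
  apply Finset.sum_congr rfl
  intro w _
  rw [← mul_assoc, step3]

end AuxStmt7

theorem stmt7 [Fintype X] [DecidableEq X] (hcard : 3 ≤ Fintype.card X)
    (x y : X) (hxy : x ≠ y)
    (c : X → X → Prop) (hc : IsTournament c)
    (l : ℕ) (hl : l = 0 ∨ l = 1) (hcxy : c x y ↔ l = 1)
    (s0 s1 : ℝ)
    (hs0 : s0 = (Set.ncard {z : X | z ≠ x ∧ z ≠ y ∧ c x z} : ℝ) / ((Fintype.card X : ℝ) - 2))
    (hs1 : s1 = (Set.ncard {z : X | z ≠ x ∧ z ≠ y ∧ c y z} : ℝ) / ((Fintype.card X : ℝ) - 2)) :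
    ∀ u v : X, u ≠ v →
      tConfig x y (l : ℝ) s0 s1 u v =
        (1 / ((Nat.factorial (Fintype.card X - 2)) : ℝ)) *
          ∑ π ∈ Finset.univ.filter (fun π : Equiv.Perm X => π x = x ∧ π y = y),
            tOf (permAct π c) u v := by
  intro u v huv
  classical
  set n := Fintype.card X with hn
  set S := Finset.univ.filter (fun π : Equiv.Perm X => π x = x ∧ π y = y) with hSdef
  have hn2 : 2 ≤ n := by omega
  have hcastn : ((n - 2 : ℕ) : ℝ) = (n : ℝ) - 2 := by
    rw [Nat.cast_sub hn2]; norm_num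
  have hne2 : ((n - 2 : ℕ) : ℝ) ≠ 0 := Nat.cast_ne_zero.mpr (by omega)
  have hfac : (((n - 2).factorial : ℕ) : ℝ) ≠ 0 :=
    Nat.cast_ne_zero.mpr (Nat.factorial_ne_zero _)
  have hcardS : S.card = (n - 2).factorial := card_stab x y hxy
  have hfix : ∀ π ∈ S, π x = x ∧ π y = y := by
    intro π hπ
    rw [hSdef, Finset.mem_filter] at hπ
    exact hπ.2
  have hsymm : ∀ π ∈ S, π.symm x = x ∧ π.symm y = y := by
    intro π hπ
    obtain ⟨h1, h2⟩ := hfix π hπ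
    constructor
    · rw [Equiv.symm_apply_eq]; exact h1.symm
    · rw [Equiv.symm_apply_eq]; exact h2.symm
  -- the key computation for sums of the form ∑ tOf (permAct π c) p v'
  have main : ∀ p v' : X, (∀ π ∈ S, π.symm p = p) → v' ≠ x → v' ≠ y →
      (∑ π ∈ S, tOf (permAct π c) p v')
        = ((n - 2).factorial : ℝ) * ((Set.ncard {z : X | z ≠ x ∧ z ≠ y ∧ c p z} : ℕ) : ℝ)
            / ((n - 2 : ℕ) : ℝ) := by
    intro p v' hp hv'x hv'y
    have h1 : (∑ π ∈ S, tOf (permAct π c) p v')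
        = ∑ π ∈ S, (fun w => tOf c p w) (π.symm v') := by
      apply Finset.sum_congr rfl
      intro π hπ
      simp only [tOf, permAct, hp π hπ]
    have h2 := key_sum x y hxy (fun w => tOf c p w) v' hv'x hv'y
    have h3 : (∑ w ∈ Finset.univ.filter (fun w : X => w ≠ x ∧ w ≠ y), (fun w => tOf c p w) w)
        = ((Set.ncard {z : X | z ≠ x ∧ z ≠ y ∧ c p z} : ℕ) : ℝ) := by
      have hset : (Set.ncard {z : X | z ≠ x ∧ z ≠ y ∧ c p z})
          = ((Finset.univ.filter (fun w : X => w ≠ x ∧ w ≠ y)).filter (fun w => c p w)).card := by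
        rw [← Set.ncard_coe_finset]
        congr 1
        ext z
        simp [and_assoc]
      rw [hset]
      simp only [tOf]
      rw [Finset.sum_boole]
    rw [h3] at h2
    rw [h1, eq_div_iff hne2]
    linarith [h2]
  -- ℕ-cast versions of the degree counts
  have hs0' : s0 = ((Set.ncard {z : X | z ≠ x ∧ z ≠ y ∧ c x z} : ℕ) : ℝ) / ((n - 2 : ℕ) : ℝ) := by
    rw [hs0, hcastn]
  have hs1' : s1 = ((Set.ncard {z : X | z ≠ x ∧ z ≠ y ∧ c y z} : ℕ) : ℝ) / ((n - 2 : ℕ) : ℝ) := by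
    rw [hs1, hcastn]
  -- flipping lemma
  have flip : ∀ (π : Equiv.Perm X) (a b : X), a ≠ b →
      tOf (permAct π c) a b = 1 - tOf (permAct π c) b a := by
    intro π a b hab
    have hne : π.symm a ≠ π.symm b := fun h => hab (π.symm.injective h)
    have h := hc.2 (π.symm a) (π.symm b) hne
    simp only [tOf, permAct]
    by_cases hca : c (π.symm a) (π.symm b)
    · simp [hca, h.mp hca]
    · have hcb : c (π.symm b) (π.symm a) := by
        by_contra hh; exact hca (h.mpr hh)
      simp [hca, hcb]
  have hlval : tOf c x y = (l : ℝ) := by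
    rcases hl with hl | hl <;> subst hl
    · simp only [tOf]
      rw [if_neg (fun h => by simpa using hcxy.mp h)]
      norm_num
    · simp only [tOf]
      rw [if_pos (hcxy.mpr rfl)]
      norm_num
  by_cases hux : u = x
  · by_cases hvy : v = y
    · -- case (x, y)
      rw [hux, hvy]
      have hval : tConfig x y (l : ℝ) s0 s1 x y = (l : ℝ) := by
        simp [tConfig, hxy]
      rw [hval]
      have hsum : (∑ π ∈ S, tOf (permAct π c) x y) = (S.card : ℝ) * (l : ℝ) := by
        rw [Finset.sum_congr rfl (fun π hπ => ?_), Finset.sum_const, nsmul_eq_mul]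
        obtain ⟨h1, h2⟩ := hsymm π hπ
        simp only [tOf, permAct, h1, h2]
        rw [← hlval]
        rfl
      rw [hsum, hcardS]
      field_simp
    · -- case (x, v), v ∉ {x, y}
      have hvx : v ≠ x := fun h => huv (by rw [hux, h])
      rw [hux]
      have hval : tConfig x y (l : ℝ) s0 s1 x v = s0 := by
        simp [tConfig, Ne.symm hvx, hvy, hxy]
      rw [hval, main x v (fun π hπ => (hsymm π hπ).1) hvx hvy, hs0']
      field_simp
      try ring
  · by_cases huy : u = y
    · by_cases hvx : v = x
      · -- case (y, x)
        rw [huy, hvx]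
        have hval : tConfig x y (l : ℝ) s0 s1 y x = 1 - (l : ℝ) := by
          simp [tConfig, hxy, Ne.symm hxy]
        rw [hval]
        have hsum : (∑ π ∈ S, tOf (permAct π c) y x) = (S.card : ℝ) * (1 - (l : ℝ)) := by
          rw [Finset.sum_congr rfl (fun π hπ => ?_), Finset.sum_const, nsmul_eq_mul]
          rw [flip π y x (Ne.symm hxy)]
          obtain ⟨h1, h2⟩ := hsymm π hπ
          simp only [tOf, permAct, h1, h2]
          rw [← hlval]
          rfl
        rw [hsum, hcardS]
        field_simp
      · -- case (y, v), v ∉ {x, y}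
        have hvy : v ≠ y := fun h => huv (by rw [huy, h])
        rw [huy]
        have hval : tConfig x y (l : ℝ) s0 s1 y v = s1 := by
          simp [tConfig, Ne.symm hvy, hvx, Ne.symm hxy]
        rw [hval, main y v (fun π hπ => (hsymm π hπ).2) hvx hvy, hs1']
        field_simp
        try ring
    · by_cases hvx : v = x
      · -- case (u, x), u ∉ {x, y}
        rw [hvx]
        have hval : tConfig x y (l : ℝ) s0 s1 u x = 1 - s0 := by
          simp [tConfig, hux, huy]
        rw [hval]
        have hsum : (∑ π ∈ S, tOf (permAct π c) u x)
            = (S.card : ℝ) - ∑ π ∈ S, tOf (permAct π c) x u := by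
          rw [Finset.sum_congr rfl (fun π hπ => flip π u x hux), Finset.sum_sub_distrib,
            Finset.sum_const, nsmul_eq_mul, mul_one]
        rw [hsum, main x u (fun π hπ => (hsymm π hπ).1) hux huy, hs0', hcardS]
        field_simp
        try ring
      · by_cases hvy : v = y
        · -- case (u, y), u ∉ {x, y}
          rw [hvy]
          have hval : tConfig x y (l : ℝ) s0 s1 u y = 1 - s1 := by
            simp [tConfig, hux, huy, hxy, Ne.symm hxy]
          rw [hval]
          have hsum : (∑ π ∈ S, tOf (permAct π c) u y)
              = (S.card : ℝ) - ∑ π ∈ S, tOf (permAct π c) y u := by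
            rw [Finset.sum_congr rfl (fun π hπ => flip π u y huy), Finset.sum_sub_distrib,
              Finset.sum_const, nsmul_eq_mul, mul_one]
          rw [hsum, main y u (fun π hπ => (hsymm π hπ).2) hux huy, hs1', hcardS]
          field_simp
          try ring
        · -- case u, v ∉ {x, y}
          have hval : tConfig x y (l : ℝ) s0 s1 u v = 1 / 2 := by
            simp [tConfig, huv, hux, huy, hvx, hvy]
          rw [hval]
          have hinv : ∀ π ∈ S, π.symm u ≠ x ∧ π.symm u ≠ y ∧ π.symm v ≠ x ∧ π.symm v ≠ y := by
            intro π hπ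
            obtain ⟨h1, h2⟩ := hfix π hπ
            refine ⟨?_, ?_, ?_, ?_⟩
            · exact fun h => hux (by rw [← Equiv.apply_symm_apply π u, h, h1])
            · exact fun h => huy (by rw [← Equiv.apply_symm_apply π u, h, h2])
            · exact fun h => hvx (by rw [← Equiv.apply_symm_apply π v, h, h1])
            · exact fun h => hvy (by rw [← Equiv.apply_symm_apply π v, h, h2])
          set i : Equiv.Perm X → Equiv.Perm X :=
            fun π => π * Equiv.swap (π.symm u) (π.symm v) with hidef
          have hiu : ∀ π : Equiv.Perm X, (i π).symm u = π.symm v := by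
            intro π
            rw [Equiv.symm_apply_eq, hidef]
            simp only [Equiv.Perm.mul_apply, Equiv.swap_apply_right, Equiv.apply_symm_apply]
          have hiv : ∀ π : Equiv.Perm X, (i π).symm v = π.symm u := by
            intro π
            rw [Equiv.symm_apply_eq, hidef]
            simp only [Equiv.Perm.mul_apply, Equiv.swap_apply_left, Equiv.apply_symm_apply]
          have hiS : ∀ π ∈ S, i π ∈ S := by
            intro π hπ
            obtain ⟨h1, h2⟩ := hfix π hπ
            obtain ⟨n1, n2, n3, n4⟩ := hinv π hπ
            rw [hSdef, Finset.mem_filter]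
            refine ⟨Finset.mem_univ _, ?_, ?_⟩
            · rw [hidef]
              simp only [Equiv.Perm.mul_apply,
                Equiv.swap_apply_of_ne_of_ne (Ne.symm n1) (Ne.symm n3), h1]
            · rw [hidef]
              simp only [Equiv.Perm.mul_apply,
                Equiv.swap_apply_of_ne_of_ne (Ne.symm n2) (Ne.symm n4), h2]
          have hii : ∀ π : Equiv.Perm X, i (i π) = π := by
            intro π
            have h5 : i (i π) = (i π) * Equiv.swap ((i π).symm u) ((i π).symm v) := rfl
            rw [h5, hiu, hiv, Equiv.swap_comm, hidef]
            simp only [mul_assoc, Equiv.swap_mul_self, mul_one]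
          have hterm : ∀ π ∈ S, tOf (permAct π c) u v = 1 - tOf (permAct (i π) c) u v := by
            intro π hπ
            have hne : π.symm u ≠ π.symm v := fun h => huv (π.symm.injective h)
            have h := hc.2 (π.symm u) (π.symm v) hne
            simp only [tOf, permAct, hiu, hiv]
            by_cases hca : c (π.symm u) (π.symm v)
            · simp [hca, h.mp hca]
            · have hcb : c (π.symm v) (π.symm u) := by
                by_contra hh; exact hca (h.mpr hh)
              simp [hca, hcb]
          have hswap : (∑ π ∈ S, tOf (permAct π c) u v)
              = ∑ π ∈ S, (1 - tOf (permAct π c) u v) :=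
            Finset.sum_nbij' i i hiS hiS (fun π _ => hii π) (fun π _ => hii π) hterm
          rw [Finset.sum_sub_distrib, Finset.sum_const, nsmul_eq_mul, mul_one] at hswap
          have hsum2 : (∑ π ∈ S, tOf (permAct π c) u v) = (S.card : ℝ) / 2 := by
            linarith [hswap]
          rw [hsum2, hcardS]
          field_simp
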